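/- Let α be a finite type with decidable equality, and represent words over formal generators and inverses as lists over α × Bool (as in Lean's construction of FreeGroup α, where free reduction is given by FreeGroup.reduce). If L is a regular language over the alphabet α × Bool, then the language {FreeGroup.reduce v | v ∈ L} of free reductions of words of L is also regular. -/

import Mathlib

open FreeGroup

namespace ReduceRegular

variable {α : Type} [DecidableEq α]

/-- `mk`-characterization of null words. -/
lemma reduce_eq_nil_iff {u : List (α × Bool)} :
    FreeGroup.reduce u = [] ↔ FreeGroup.mk u = FreeGroup.mk ([] : List (α × Bool)) := by
  constructor
  · intro h
    exact FreeGroup.reduce.exact (by simp [h])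
  · intro h
    have := FreeGroup.reduce.sound h
    simpa using this

/-- `w` is obtained from `v` by deleting chunks which freely reduce to the empty word,
including a trailing chunk. -/
inductive Itl : List (α × Bool) → List (α × Bool) → Prop
  | nil (v : List (α × Bool)) (hv : FreeGroup.reduce v = []) : Itl [] v
  | cons (c : α × Bool) (w u v : List (α × Bool)) (hu : FreeGroup.reduce u = [])
      (h : Itl w v) : Itl (c :: w) (u ++ c :: v)

/-- Same, without the trailing chunk. -/
inductive PreC : List (α × Bool) → List (α × Bool) → Prop
  | nil : PreC [] []
  | cons (c : α × Bool) (w u v : List (α × Bool)) (hu : FreeGroup.reduce u = [])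
      (h : PreC w v) : PreC (c :: w) (u ++ c :: v)

lemma itl_of_preC {w v₁ u : List (α × Bool)} (h : PreC w v₁) (hu : FreeGroup.reduce u = []) :
    Itl w (v₁ ++ u) := by
  induction h with
  | nil => exact Itl.nil u hu
  | cons c w u' v hu' h ih =>
    rw [List.append_assoc, List.cons_append]
    exact Itl.cons c w u' (v ++ u) hu' ih

lemma preC_of_itl {w v : List (α × Bool)} (h : Itl w v) :
    ∃ v₁ u, PreC w v₁ ∧ FreeGroup.reduce u = [] ∧ v = v₁ ++ u := by
  induction h with
  | nil v hv => exact ⟨[], v, PreC.nil, hv, rfl⟩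
  | cons c w u v hu h ih =>
    obtain ⟨v₁, u', hp, hu', rfl⟩ := ih
    exact ⟨u ++ c :: v₁, u', PreC.cons c w u v₁ hu hp, hu', by simp⟩

lemma itl_self (w : List (α × Bool)) : Itl w w := by
  induction w with
  | nil => exact Itl.nil [] rfl
  | cons c w ih => exact Itl.cons c w [] w rfl ih

lemma itl_mk {w v : List (α × Bool)} (h : Itl w v) : FreeGroup.mk v = FreeGroup.mk w := by
  induction h with
  | nil v hv => exact reduce_eq_nil_iff.mp hv
  | cons c w u v hu ih ih2 =>
    have h1 : FreeGroup.mk u = FreeGroup.mk ([] : List (α × Bool)) := reduce_eq_nil_iff.mp hu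
    calc FreeGroup.mk (u ++ c :: v) = FreeGroup.mk u * FreeGroup.mk (c :: v) := by
            rw [FreeGroup.mul_mk]
      _ = FreeGroup.mk (c :: v) := by rw [h1, ← FreeGroup.one_eq_mk, one_mul]
      _ = FreeGroup.mk [c] * FreeGroup.mk v := by rw [FreeGroup.mul_mk]; rfl
      _ = FreeGroup.mk [c] * FreeGroup.mk w := by rw [ih2]
      _ = FreeGroup.mk (c :: w) := by rw [FreeGroup.mul_mk]; rfl

lemma itl_reduce {w v : List (α × Bool)} (h : Itl w v) :
    FreeGroup.reduce v = FreeGroup.reduce w :=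
  FreeGroup.reduce.sound (itl_mk h)

lemma itl_insert {P : List (α × Bool)} (hP : FreeGroup.reduce P = []) :
    ∀ {w v : List (α × Bool)}, Itl w v → ∀ A B, v = A ++ B → Itl w (A ++ P ++ B) := by
  intro w v h
  induction h with
  | nil v hv =>
    intro A B hAB
    subst hAB
    refine Itl.nil _ ?_
    rw [reduce_eq_nil_iff] at hv hP ⊢
    calc FreeGroup.mk (A ++ P ++ B)
        = FreeGroup.mk A * FreeGroup.mk P * FreeGroup.mk B := by rw [FreeGroup.mul_mk,
          FreeGroup.mul_mk]
      _ = FreeGroup.mk A * FreeGroup.mk B := by rw [hP, ← FreeGroup.one_eq_mk, mul_one]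
      _ = FreeGroup.mk (A ++ B) := FreeGroup.mul_mk
      _ = FreeGroup.mk ([] : List (α × Bool)) := hv
  | cons c w u v hu h ih =>
    intro A B hAB
    rcases List.append_eq_append_iff.mp hAB with ⟨a', ha1, ha2⟩ | ⟨c', hc1, hc2⟩
    · -- A = u ++ a', c :: v = a' ++ B
      cases a' with
      | nil =>
        -- A = u, B = c :: v ; insert P at the end of the chunk u
        simp only [List.append_nil] at ha1
        simp only [List.nil_append] at ha2
        rw [ha1, ← ha2]
        have : u ++ P ++ (c :: v) = (u ++ P) ++ c :: v := by simp
        rw [this]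
        refine Itl.cons c w (u ++ P) v ?_ h
        rw [reduce_eq_nil_iff] at hu hP ⊢
        rw [← FreeGroup.mul_mk, hu, hP, ← FreeGroup.one_eq_mk, one_mul]
      | cons c₀ t =>
        -- c = c₀, v = t ++ B
        rw [List.cons_append] at ha2
        injection ha2 with hc₀ hv
        subst hc₀
        have hins := ih t B hv
        have : A ++ P ++ B = u ++ c :: (t ++ P ++ B) := by
          subst ha1; simp
        rw [this]
        exact Itl.cons c w u (t ++ P ++ B) hu hins
    · -- u = A ++ c', B = c' ++ c :: v ; insert P inside the chunk u
      have : A ++ P ++ B = (A ++ P ++ c') ++ c :: v := by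
        subst hc2; simp
      rw [this]
      refine Itl.cons c w (A ++ P ++ c') v ?_ h
      rw [reduce_eq_nil_iff] at hu ⊢
      rw [reduce_eq_nil_iff] at hP
      calc FreeGroup.mk (A ++ P ++ c')
          = FreeGroup.mk A * FreeGroup.mk P * FreeGroup.mk c' := by
            rw [FreeGroup.mul_mk, FreeGroup.mul_mk]
        _ = FreeGroup.mk A * FreeGroup.mk c' := by
            rw [hP, ← FreeGroup.one_eq_mk, mul_one]
        _ = FreeGroup.mk (A ++ c') := FreeGroup.mul_mk
        _ = FreeGroup.mk u := by rw [hc1]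
        _ = FreeGroup.mk [] := hu

lemma itl_of_red {v w : List (α × Bool)} (h : FreeGroup.Red v w) : Itl w v := by
  induction h using Relation.ReflTransGen.head_induction_on with
  | refl => exact itl_self w
  | head hstep _ ih =>
    rcases hstep with @⟨A, B, x, b⟩
    have hP : FreeGroup.reduce [(x, b), (x, !b)] = ([] : List (α × Bool)) := by
      have : FreeGroup.Red.Step ((x, b) :: (x, !b) :: ([] : List (α × Bool))) [] :=
        FreeGroup.Red.Step.cons_not
      have := FreeGroup.reduce.Step.eq this
      simpa using this
    have := itl_insert hP ih A B rfl
    simpa using this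

lemma itl_reduce_self (v : List (α × Bool)) : Itl (FreeGroup.reduce v) v :=
  itl_of_red (FreeGroup.reduce.red)

/-! ### The saturated NFA -/

variable {σ : Type} (M : DFA (α × Bool) σ)

/-- `q` is reachable from `p` by a null word. -/
def NullRel (p q : σ) : Prop :=
  ∃ u, FreeGroup.reduce u = [] ∧ M.evalFrom p u = q

/-- The saturated NFA. -/
def satNFA : NFA (α × Bool) σ where
  step p c := {q | ∃ r, NullRel M p r ∧ q = M.step r c}
  start := {M.start}
  accept := {q | ∃ r, NullRel M q r ∧ r ∈ M.accept}

lemma nfa_evalFrom_mono {T : Type} (N : NFA (α × Bool) T) :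
    ∀ (w : List (α × Bool)) (S S' : Set T), S ⊆ S' → N.evalFrom S w ⊆ N.evalFrom S' w := by
  intro w
  induction w with
  | nil => intro S S' h; simpa [NFA.evalFrom] using h
  | cons c w ih =>
    intro S S' h
    have hstep : N.stepSet S c ⊆ N.stepSet S' c := by
      intro q hq
      rw [NFA.mem_stepSet] at hq ⊢
      obtain ⟨t, ht, hq⟩ := hq
      exact ⟨t, h ht, hq⟩
    simpa [NFA.evalFrom] using ih _ _ hstep

lemma satNFA_fwd {w v : List (α × Bool)} (h : PreC w v) :
    ∀ p : σ, M.evalFrom p v ∈ (satNFA M).evalFrom {p} w := by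
  induction h with
  | nil => intro p; simp [NFA.evalFrom]
  | cons c w u v hu h ih =>
    intro p
    have hstep : M.step (M.evalFrom p u) c ∈ (satNFA M).step p c :=
      ⟨M.evalFrom p u, ⟨u, hu, rfl⟩, rfl⟩
    have heval : M.evalFrom p (u ++ c :: v) = M.evalFrom (M.step (M.evalFrom p u) c) v := by
      simp [DFA.evalFrom, List.foldl_append]
    rw [heval]
    have h1 := ih (M.step (M.evalFrom p u) c)
    have h2 : ({M.step (M.evalFrom p u) c} : Set σ) ⊆ (satNFA M).step p c := by
      simpa using hstep
    have h3 := nfa_evalFrom_mono (satNFA M) w _ _ h2 h1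
    have h4 : (satNFA M).evalFrom ((satNFA M).step p c) w
        = (satNFA M).evalFrom {p} (c :: w) := by
      simp [NFA.evalFrom, NFA.stepSet]
    rw [← h4]
    exact h3

lemma satNFA_bwd :
    ∀ (w : List (α × Bool)) (S : Set σ) (q : σ), q ∈ (satNFA M).evalFrom S w →
      ∃ p ∈ S, ∃ v, PreC w v ∧ M.evalFrom p v = q := by
  intro w
  induction w with
  | nil =>
    intro S q hq
    simp only [NFA.evalFrom, List.foldl_nil] at hq
    exact ⟨q, hq, [], PreC.nil, rfl⟩
  | cons c w ih =>
    intro S q hq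
    have hq' : q ∈ (satNFA M).evalFrom ((satNFA M).stepSet S c) w := hq
    obtain ⟨s, hs, v', hpre, hev⟩ := ih _ _ hq'
    rw [NFA.mem_stepSet] at hs
    obtain ⟨p, hp, hstep⟩ := hs
    obtain ⟨r, ⟨u, hu, hru⟩, rfl⟩ := hstep
    refine ⟨p, hp, u ++ c :: v', PreC.cons c w u v' hu hpre, ?_⟩
    rw [show M.evalFrom p (u ++ c :: v') = M.evalFrom (M.step (M.evalFrom p u) c) v' by
      simp [DFA.evalFrom, List.foldl_append]]
    rw [hru]
    exact hev

lemma satNFA_accepts :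
    (satNFA M).accepts = {w | ∃ v ∈ M.accepts, Itl w v} := by
  ext w
  rw [NFA.mem_accepts]
  constructor
  · rintro ⟨q, hqacc, hq⟩
    obtain ⟨p, hp, v₁, hpre, hev⟩ := satNFA_bwd M w (satNFA M).start q hq
    have hp' : p = M.start := hp
    obtain ⟨r, ⟨u, hu, hru⟩, hr⟩ := hqacc
    refine ⟨v₁ ++ u, ?_, itl_of_preC hpre hu⟩
    rw [DFA.mem_accepts]
    have : M.eval (v₁ ++ u) = M.evalFrom (M.evalFrom M.start v₁) u := by
      simp [DFA.eval, DFA.evalFrom, List.foldl_append]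
    rw [this, ← hp', hev, hru]
    exact hr
  · rintro ⟨v, hv, hitl⟩
    obtain ⟨v₁, u, hpre, hu, rfl⟩ := preC_of_itl hitl
    refine ⟨M.evalFrom M.start v₁, ⟨M.evalFrom (M.evalFrom M.start v₁) u, ⟨u, hu, rfl⟩, ?_⟩, ?_⟩
    · rw [DFA.mem_accepts] at hv
      have : M.eval (v₁ ++ u) = M.evalFrom (M.evalFrom M.start v₁) u := by
        simp [DFA.eval, DFA.evalFrom, List.foldl_append]
      rwa [this] at hv
    · exact satNFA_fwd M hpre M.start

/-! ### The DFA of reduced words -/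

/-- Relation between consecutive letters in a reduced word. -/
def Rel (a c : α × Bool) : Prop := ¬(a.1 = c.1 ∧ a.2 = !c.2)

instance : DecidableRel (Rel (α := α)) := fun a c => by
  unfold Rel; infer_instance

/-- DFA recognizing reduced words. `none` is a dead state; `some none` is the start;
`some (some a)` remembers the last letter. -/
def redDFA : DFA (α × Bool) (Option (Option (α × Bool))) where
  step s c := match s with
    | none => none
    | some none => some (some c)
    | some (some a) => if Rel a c then some (some c) else none
  start := some none
  accept := {s | s ≠ none}

lemma redDFA_dead : ∀ w : List (α × Bool), (redDFA (α := α)).evalFrom none w = none := by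
  intro w
  induction w with
  | nil => rfl
  | cons c w ih => simpa [DFA.evalFrom, redDFA] using ih

lemma redDFA_alive : ∀ (w : List (α × Bool)) (a : α × Bool),
    (List.Chain (Rel (α := α)) a w →
      (redDFA (α := α)).evalFrom (some (some a)) w = some (some (w.getLastD a))) ∧
    (¬List.Chain (Rel (α := α)) a w →
      (redDFA (α := α)).evalFrom (some (some a)) w = none) := by
  intro w
  induction w with
  | nil =>
    intro a
    constructor
    · intro _; rfl
    · intro h; exact absurd List.Chain.nil h
  | cons c w ih =>
    intro a
    constructor
    · intro h
      simp only [List.Chain, List.isChain_cons_cons] at h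
      obtain ⟨hac, hcw⟩ := h
      have : (redDFA (α := α)).evalFrom (some (some a)) (c :: w)
          = (redDFA (α := α)).evalFrom (some (some c)) w := by
        simp [DFA.evalFrom, redDFA, if_pos hac]
      rw [this, (ih c).1 hcw, List.getLastD_cons]
    · intro h
      simp only [List.Chain, List.isChain_cons_cons] at h
      by_cases hac : Rel a c
      · have hcw : ¬List.Chain (Rel (α := α)) c w := fun hc => h ⟨hac, hc⟩
        have : (redDFA (α := α)).evalFrom (some (some a)) (c :: w)
            = (redDFA (α := α)).evalFrom (some (some c)) w := by
          simp [DFA.evalFrom, redDFA, if_pos hac]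
        rw [this, (ih c).2 hcw]
      · have : (redDFA (α := α)).evalFrom (some (some a)) (c :: w)
            = (redDFA (α := α)).evalFrom none w := by
          simp [DFA.evalFrom, redDFA, if_neg hac]
        rw [this, redDFA_dead]

lemma redDFA_accepts :
    (redDFA (α := α)).accepts = {w : List (α × Bool) | List.Chain' (Rel (α := α)) w} := by
  ext w
  rw [DFA.mem_accepts]
  cases w with
  | nil =>
    constructor
    · intro _
      exact (List.IsChain.nil : List.Chain' (Rel (α := α)) [])
    · intro _
      simp [redDFA, DFA.eval]
  | cons c w =>
    have h1 : (redDFA (α := α)).eval (c :: w)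
        = (redDFA (α := α)).evalFrom (some (some c)) w := by
      simp [DFA.eval, DFA.evalFrom, redDFA]
    by_cases h : List.Chain (Rel (α := α)) c w
    · constructor
      · intro _
        exact h
      · intro _
        rw [h1, (redDFA_alive w c).1 h]
        simp [redDFA]
    · constructor
      · intro hacc
        exfalso
        rw [h1, (redDFA_alive w c).2 h] at hacc
        simp [redDFA] at hacc
      · intro hmem
        exact absurd (hmem : List.Chain (Rel (α := α)) c w) h

/-! ### Reduced words are exactly chains -/

lemma chain'_of_reduce_eq {w : List (α × Bool)} (h : FreeGroup.reduce w = w) :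
    List.Chain' (Rel (α := α)) w := by
  induction w with
  | nil => exact List.IsChain.nil
  | cons x L ih =>
    have hlen : (FreeGroup.reduce L).length ≤ L.length :=
      (FreeGroup.Red.sublist FreeGroup.reduce.red).length_le
    have hL : FreeGroup.reduce L = L := by
      rcases hred : FreeGroup.reduce L with _ | ⟨hd, tl⟩
      · have hthis : FreeGroup.reduce (x :: L) = [x] := by
          rw [FreeGroup.reduce.cons, hred]
        rw [h] at hthis
        injection hthis with _ h2
        rw [h2]
      · by_cases hc : x.1 = hd.1 ∧ x.2 = !hd.2
        · have hthis : FreeGroup.reduce (x :: L) = tl := by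
            rw [FreeGroup.reduce.cons, hred]
            simp [hc]
          rw [h] at hthis
          have hlen2 : (hd :: tl).length ≤ L.length := hred ▸ hlen
          have hlen3 : (x :: L).length = tl.length := congrArg List.length hthis
          simp only [List.length_cons] at hlen2 hlen3
          omega
        · have hthis : FreeGroup.reduce (x :: L) = x :: hd :: tl := by
            rw [FreeGroup.reduce.cons, hred]
            simp [hc]
          rw [h] at hthis
          injection hthis with _ h2
          exact h2.symm
    have hchL := ih hL
    cases L with
    | nil => exact List.IsChain.singleton x
    | cons hd tl =>
      refine List.IsChain.cons_cons ?_ hchL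
      by_cases hc : x.1 = hd.1 ∧ x.2 = !hd.2
      · exfalso
        have hthis : FreeGroup.reduce (x :: hd :: tl) = tl := by
          rw [FreeGroup.reduce.cons, hL]
          simp [hc]
        rw [h] at hthis
        have := congrArg List.length hthis
        simp only [List.length_cons] at this
        omega
      · exact hc

lemma reduce_eq_of_chain' {w : List (α × Bool)} (h : List.Chain' (Rel (α := α)) w) :
    FreeGroup.reduce w = w := by
  induction w with
  | nil => rfl
  | cons x L ih =>
    have hL : FreeGroup.reduce L = L := ih h.tail
    rw [FreeGroup.reduce.cons, hL]
    cases L with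
    | nil => rfl
    | cons hd tl =>
      have hrel : Rel x hd := List.isChain_cons_cons.mp h |>.1
      simp only []
      rw [if_neg hrel]

lemma reduce_eq_self_iff {w : List (α × Bool)} :
    FreeGroup.reduce w = w ↔ List.Chain' (Rel (α := α)) w :=
  ⟨chain'_of_reduce_eq, reduce_eq_of_chain'⟩

/-! ### Product DFA for intersection -/

def interDFA {T : Type} {σ₁ σ₂ : Type} (M₁ : DFA T σ₁) (M₂ : DFA T σ₂) :
    DFA T (σ₁ × σ₂) where
  step p c := (M₁.step p.1 c, M₂.step p.2 c)
  start := (M₁.start, M₂.start)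
  accept := {p | p.1 ∈ M₁.accept ∧ p.2 ∈ M₂.accept}

lemma interDFA_evalFrom {T : Type} {σ₁ σ₂ : Type} (M₁ : DFA T σ₁) (M₂ : DFA T σ₂) :
    ∀ (w : List T) (p : σ₁) (q : σ₂),
      (interDFA M₁ M₂).evalFrom (p, q) w = (M₁.evalFrom p w, M₂.evalFrom q w) := by
  intro w
  induction w with
  | nil => intro p q; rfl
  | cons c w ih =>
    intro p q
    simpa [DFA.evalFrom, interDFA] using ih (M₁.step p c) (M₂.step q c)

lemma interDFA_mem {T : Type} {σ₁ σ₂ : Type} (M₁ : DFA T σ₁) (M₂ : DFA T σ₂)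
    (w : List T) :
    w ∈ (interDFA M₁ M₂).accepts ↔ w ∈ M₁.accepts ∧ w ∈ M₂.accepts := by
  rw [DFA.mem_accepts]
  change (interDFA M₁ M₂).evalFrom (M₁.start, M₂.start) w ∈ _ ↔ _
  rw [interDFA_evalFrom]
  exact Iff.rfl

end ReduceRegular

/-- Lemma 4.4: if `L` is a regular language over the alphabet `α × Bool` (words in the
generators and formal inverses), then the language of free reductions of words of `L`
is regular too. -/
theorem reduce_image_regular {α : Type} [Fintype α] [DecidableEq α]
    (L : Language (α × Bool)) (hL : L.IsRegular) :
    Language.IsRegular {w : List (α × Bool) | ∃ v ∈ L, FreeGroup.reduce v = w} := by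
  classical
  obtain ⟨σ, fσ, M, hM⟩ := hL
  refine ⟨Set σ × Option (Option (α × Bool)), inferInstance,
    ReduceRegular.interDFA (ReduceRegular.satNFA M).toDFA (ReduceRegular.redDFA (α := α)), ?_⟩
  ext w
  change _ ↔ ∃ v ∈ L, FreeGroup.reduce v = w
  rw [ReduceRegular.interDFA_mem, (ReduceRegular.satNFA M).toDFA_correct,
    ReduceRegular.satNFA_accepts, ReduceRegular.redDFA_accepts, hM]
  constructor
  · rintro ⟨hsat, hch⟩
    change ∃ v ∈ L, ReduceRegular.Itl w v at hsat
    change List.Chain' ReduceRegular.Rel w at hch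
    obtain ⟨v, hv, hitl⟩ := hsat
    refine ⟨v, hv, ?_⟩
    rw [ReduceRegular.itl_reduce hitl, ReduceRegular.reduce_eq_self_iff.mpr hch]
  · rintro ⟨v, hv, rfl⟩
    constructor
    · exact ⟨v, hv, ReduceRegular.itl_reduce_self v⟩
    · exact ReduceRegular.reduce_eq_self_iff.mp (FreeGroup.reduce.idem)
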